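/- Let q be an odd prime power and let G_2 be the graph on vertex set F_q^{2×2} where M ∼ N iff rank(M - N) = 2. Then G_2 is strongly regular with parameters v = q^4, k = q(q-1)(q^2-1), λ = q(q^3 - 2q^2 - q + 3), μ = q(q-1)(q^2 - q - 1). -/

import Mathlib

open Matrix Finset

section Aux

variable {F : Type} [Field F] [Fintype F] [DecidableEq F]

omit [Fintype F] [DecidableEq F] in
lemma aux_rank2_iff (A : Matrix (Fin 2) (Fin 2) F) : A.rank = 2 ↔ A.det ≠ 0 := by
  constructor
  · intro h hdet
    obtain ⟨v, hv, hAv⟩ := (Matrix.exists_mulVec_eq_zero_iff).2 hdet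
    have hker : LinearMap.ker A.mulVecLin ≠ ⊥ := by
      intro hbot
      exact hv (by simpa [hbot] using (LinearMap.mem_ker.2 (by simpa using hAv) :
        v ∈ LinearMap.ker A.mulVecLin))
    have h1 : 0 < Module.finrank F (LinearMap.ker A.mulVecLin) := by
      rw [Module.finrank_pos_iff]
      exact Submodule.nontrivial_iff_ne_bot.2 hker
    have h2 := LinearMap.finrank_range_add_finrank_ker A.mulVecLin
    have h3 : Module.finrank F (Fin 2 → F) = 2 := by simp
    rw [h3] at h2
    have : A.rank = Module.finrank F (LinearMap.range A.mulVecLin) := rfl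
    omega
  · intro h
    have := Matrix.rank_of_isUnit A ((Matrix.isUnit_iff_isUnit_det A).2 h.isUnit)
    simpa using this

lemma aux_card_filter_prod {α β : Type*} [Fintype α] [Fintype β] (P : α × β → Prop)
    [DecidablePred P] :
    (univ.filter P).card = ∑ a : α, (univ.filter fun b => P (a, b)).card := by
  rw [Finset.card_filter, Fintype.sum_prod_type]
  exact Finset.sum_congr rfl fun a _ => (Finset.card_filter _ _).symm

lemma aux_card_solpairs (s : F) : (univ.filter fun p : F × F => p.1 * p.2 = s).card
    = if s = 0 then 2 * Fintype.card F - 1 else Fintype.card F - 1 := by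
  have hq1 : 1 ≤ Fintype.card F := Fintype.card_pos
  rw [aux_card_filter_prod]
  split_ifs with hs
  · subst hs
    have h1 : ∀ a : F, (univ.filter fun d : F => a * d = 0).card
        = if a = 0 then Fintype.card F else 1 := by
      intro a
      split_ifs with ha
      · simp [ha]
      · have : (univ.filter fun d : F => a * d = 0) = univ.filter fun d : F => d = 0 := by
          apply Finset.filter_congr; intro d _; simp [mul_eq_zero, ha]
        rw [this, Finset.filter_eq']; simp
    rw [Finset.sum_congr rfl fun a _ => h1 a]
    have h2 : ∀ a : F, (if a = 0 then Fintype.card F else 1)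
        = (if a = 0 then Fintype.card F - 1 else 0) + 1 := by
      intro a; split_ifs <;> omega
    rw [Finset.sum_congr rfl fun a _ => h2 a, Finset.sum_add_distrib,
      Finset.sum_ite_eq' univ (0 : F)]
    simp; omega
  · have h1 : ∀ a : F, (univ.filter fun d : F => a * d = s).card
        = if a = 0 then 0 else 1 := by
      intro a
      split_ifs with ha
      · have : (univ.filter fun d : F => a * d = s) = ∅ := by
          apply Finset.filter_false_of_mem; intro d _; simp [ha]; exact fun h => hs h.symm
        simp [this]
      · have : (univ.filter fun d : F => a * d = s) = univ.filter fun d : F => d = a⁻¹ * s := by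
          apply Finset.filter_congr; intro d _
          constructor
          · intro h; rw [← h, inv_mul_cancel_left₀ ha]
          · intro h; rw [h, mul_inv_cancel_left₀ ha]
        rw [this, Finset.filter_eq']; simp
    rw [Finset.sum_congr rfl fun a _ => h1 a]
    have h2 : ∀ a : F, (if a = 0 then 0 else 1) = if a ≠ 0 then 1 else 0 := by
      intro a; by_cases h : a = 0 <;> simp [h]
    rw [Finset.sum_congr rfl fun a _ => h2 a, Finset.sum_ite, Finset.sum_const,
      Finset.sum_const]
    simp [Finset.filter_ne' univ (0:F), Finset.card_erase_of_mem]

/-- The number of pairs `(b,c)` with `b*c = s`, as an integer. -/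
noncomputable def W (F : Type) [Fintype F] [DecidableEq F] [Zero F] : F → ℤ :=
  fun s => if s = 0 then 2 * (Fintype.card F : ℤ) - 1 else (Fintype.card F : ℤ) - 1

lemma aux_card_solpairs_int (s : F) :
    ((univ.filter fun p : F × F => p.1 * p.2 = s).card : ℤ) = W F s := by
  have hq1 : 1 ≤ Fintype.card F := Fintype.card_pos
  rw [aux_card_solpairs, W]
  split_ifs <;> [rw [Nat.cast_sub (by omega)]; rw [Nat.cast_sub (by omega)]] <;>
    push_cast <;> ring

lemma aux_card_hit (s₁ s₂ : F) :
    ((univ.filter fun p : F × F => p.1 * p.2 = s₁ ∨ p.1 * p.2 = s₂).card : ℤ)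
      = W F s₁ + W F s₂ - (if s₁ = s₂ then W F s₁ else 0) := by
  by_cases h : s₁ = s₂
  · subst h
    rw [if_pos rfl]
    simp only [or_self, aux_card_solpairs_int]
    ring
  · rw [if_neg h, Finset.filter_or, Finset.card_union_of_disjoint, Nat.cast_add,
      aux_card_solpairs_int, aux_card_solpairs_int]
    · ring
    · rw [Finset.disjoint_left]
      intro p h1 h2
      rw [Finset.mem_filter] at h1 h2
      exact h (h1.2 ▸ h2.2)

lemma aux_count_master (ψ : F × F → F) :
    ((univ.filter fun x : (F × F) × (F × F) =>
        x.1.1 * x.1.2 ≠ x.2.1 * x.2.2 ∧ ψ x.1 ≠ x.2.1 * x.2.2).card : ℤ)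
      = (Fintype.card F : ℤ)^4
        - ∑ p : F × F, (W F (p.1 * p.2) + W F (ψ p)
            - if p.1 * p.2 = ψ p then W F (p.1 * p.2) else 0) := by
  rw [aux_card_filter_prod]
  push_cast
  have key : ∀ p : F × F, ((univ.filter fun b : F × F =>
      p.1 * p.2 ≠ b.1 * b.2 ∧ ψ p ≠ b.1 * b.2).card : ℤ)
      = (Fintype.card F : ℤ)^2 - (W F (p.1 * p.2) + W F (ψ p)
          - if p.1 * p.2 = ψ p then W F (p.1 * p.2) else 0) := by
    intro p
    have e1 : (univ.filter fun b : F × F => p.1 * p.2 ≠ b.1 * b.2 ∧ ψ p ≠ b.1 * b.2)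
        = univ \ (univ.filter fun b : F × F => b.1 * b.2 = p.1 * p.2 ∨ b.1 * b.2 = ψ p) := by
      rw [← Finset.filter_not]
      apply Finset.filter_congr; intro b _
      simp only [not_or]; constructor
      · rintro ⟨h1, h2⟩; exact ⟨fun h => h1 h.symm, fun h => h2 h.symm⟩
      · rintro ⟨h1, h2⟩; exact ⟨fun h => h1 h.symm, fun h => h2 h.symm⟩
    rw [e1, Finset.card_sdiff_of_subset (Finset.filter_subset _ _),
      Nat.cast_sub (Finset.card_filter_le _ _), aux_card_hit]
    have : ((univ : Finset (F × F)).card : ℤ) = (Fintype.card F : ℤ)^2 := by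
      simp [Fintype.card_prod]; ring
    rw [this]
  rw [Finset.sum_congr rfl fun p _ => key p, Finset.sum_sub_distrib, Finset.sum_const]
  simp only [Finset.card_univ, nsmul_eq_mul]
  push_cast [Fintype.card_prod]
  ring

lemma aux_sum_W_mul : ∑ p : F × F, W F (p.1 * p.2)
    = (2 * (Fintype.card F : ℤ) - 1)^2 + ((Fintype.card F : ℤ) - 1)^3 := by
  have hq1 : 1 ≤ Fintype.card F := Fintype.card_pos
  calc ∑ p : F × F, W F (p.1 * p.2)
      = ∑ p : F × F, ∑ s : F, (if p.1 * p.2 = s then W F s else 0) := by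
        refine Finset.sum_congr rfl fun p _ => ?_
        rw [Finset.sum_ite_eq univ (p.1 * p.2) (W F)]
        simp
    _ = ∑ s : F, ∑ p : F × F, (if p.1 * p.2 = s then W F s else 0) := Finset.sum_comm
    _ = ∑ s : F, ((univ.filter fun p : F × F => p.1 * p.2 = s).card : ℤ) * W F s := by
        refine Finset.sum_congr rfl fun s _ => ?_
        rw [Finset.sum_ite, Finset.sum_const, Finset.sum_const_zero, add_zero, nsmul_eq_mul]
    _ = ∑ s : F, W F s * W F s := by
        refine Finset.sum_congr rfl fun s _ => ?_
        rw [aux_card_solpairs_int]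
    _ = (∑ s ∈ (univ : Finset F) \ {0}, W F s * W F s) + W F 0 * W F 0 :=
        Finset.sum_eq_sum_sdiff_singleton_add (Finset.mem_univ 0) _
    _ = (∑ _s ∈ (univ : Finset F) \ {0}, ((Fintype.card F : ℤ) - 1)^2) + W F 0 * W F 0 := by
        refine congrArg (· + _) (Finset.sum_congr rfl fun s hs => ?_)
        rw [Finset.mem_sdiff, Finset.mem_singleton] at hs
        rw [W, if_neg hs.2]; ring
    _ = _ := by
        rw [Finset.sum_const, Finset.card_sdiff_of_subset (by simp), Finset.card_univ,
          Finset.card_singleton, nsmul_eq_mul, Nat.cast_sub hq1, W, if_pos rfl]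
        push_cast; ring

lemma aux_sum_W_shift2 : ∑ p : F × F, W F ((p.1 - 1) * (p.2 - 1))
    = ∑ p : F × F, W F (p.1 * p.2) :=
  Fintype.sum_equiv (Equiv.prodCongr (Equiv.subRight (1 : F)) (Equiv.subRight (1 : F)))
    _ _ (fun _ => rfl)

lemma aux_sum_W_shift1 : ∑ p : F × F, W F ((p.1 - 1) * p.2)
    = ∑ p : F × F, W F (p.1 * p.2) :=
  Fintype.sum_equiv (Equiv.prodCongr (Equiv.subRight (1 : F)) (Equiv.refl F))
    _ _ (fun _ => rfl)

lemma aux_sum_diag2 :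
    ∑ p : F × F, (if p.1 * p.2 = (p.1 - 1) * (p.2 - 1) then W F (p.1 * p.2) else 0)
    = 2 * (2 * (Fintype.card F : ℤ) - 1)
        + ((Fintype.card F : ℤ) - 2) * ((Fintype.card F : ℤ) - 1) := by
  have hq2 : 2 ≤ Fintype.card F := Fintype.one_lt_card
  rw [Fintype.sum_prod_type]
  have step1 : ∀ a : F, (∑ d : F, if a * d = (a - 1) * (d - 1) then W F (a * d) else 0)
      = W F (a * (1 - a)) := by
    intro a
    have : ∀ d : F, (if a * d = (a - 1) * (d - 1) then W F (a * d) else 0)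
        = (if d = 1 - a then W F (a * d) else 0) := by
      intro d
      refine if_congr ?_ rfl rfl
      constructor
      · intro h; linear_combination h
      · intro h; linear_combination h
    rw [Finset.sum_congr rfl fun d _ => this d, Finset.sum_ite_eq' univ (1 - a)]
    simp
  rw [Finset.sum_congr rfl fun a _ => step1 a]
  have step2 : ∀ a : F, W F (a * (1 - a))
      = if a = 0 ∨ a = 1 then 2 * (Fintype.card F : ℤ) - 1 else (Fintype.card F : ℤ) - 1 := by
    intro a
    rw [W]
    refine if_congr ?_ rfl rfl
    rw [mul_eq_zero, sub_eq_zero, eq_comm (a := (1:F))]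
  rw [Finset.sum_congr rfl fun a _ => step2 a, Finset.sum_ite, Finset.sum_const,
    Finset.sum_const]
  have h01 : (univ.filter fun a : F => a = 0 ∨ a = 1) = {0, 1} := by
    ext a; simp
  have hc1 : (univ.filter fun a : F => a = 0 ∨ a = 1).card = 2 := by
    rw [h01]; rw [Finset.card_insert_of_notMem (by simp), Finset.card_singleton]
  have hc2 : (univ.filter fun a : F => ¬(a = 0 ∨ a = 1)).card = Fintype.card F - 2 := by
    have := Finset.card_filter_add_card_filter_not
      (s := (univ : Finset F)) (p := fun a : F => a = 0 ∨ a = 1)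
    rw [Finset.card_univ] at this
    omega
  rw [hc1, hc2, nsmul_eq_mul, nsmul_eq_mul, Nat.cast_sub hq2]
  push_cast; ring

lemma aux_sum_diag1 : ∑ p : F × F, (if p.1 * p.2 = (p.1 - 1) * p.2 then W F (p.1 * p.2) else 0)
    = (Fintype.card F : ℤ) * (2 * (Fintype.card F : ℤ) - 1) := by
  rw [Fintype.sum_prod_type]
  have step1 : ∀ a : F, (∑ d : F, if a * d = (a - 1) * d then W F (a * d) else 0)
      = W F 0 := by
    intro a
    have : ∀ d : F, (if a * d = (a - 1) * d then W F (a * d) else 0)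
        = (if d = 0 then W F (a * d) else 0) := by
      intro d
      refine if_congr ?_ rfl rfl
      constructor
      · intro h; linear_combination h
      · intro h; linear_combination h
    rw [Finset.sum_congr rfl fun d _ => this d, Finset.sum_ite_eq' univ (0 : F)]
    simp [W]
  rw [Finset.sum_congr rfl fun a _ => step1 a, Finset.sum_const, Finset.card_univ,
    nsmul_eq_mul, W, if_pos rfl]

/-- The equivalence sending a 2×2 matrix to ((A₀₀, A₁₁), (A₀₁, A₁₀)). -/
def mE : Matrix (Fin 2) (Fin 2) F ≃ (F × F) × (F × F) where
  toFun A := ((A 0 0, A 1 1), (A 0 1, A 1 0))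
  invFun x := Matrix.of ![![x.1.1, x.2.1], ![x.2.2, x.1.2]]
  left_inv A := by
    ext i j
    fin_cases i <;> fin_cases j <;> simp [Matrix.of_apply]
  right_inv x := by simp [Matrix.of_apply]

lemma aux_card_transfer (P : Matrix (Fin 2) (Fin 2) F → Prop) [DecidablePred P] :
    Fintype.card {A : Matrix (Fin 2) (Fin 2) F // P A}
      = (univ.filter fun x : (F × F) × (F × F) => P (mE.symm x)).card := by
  rw [← Fintype.card_subtype]
  exact Fintype.card_congr (mE.symm.symm.subtypeEquiv fun A => by
    rw [Equiv.symm_symm, Equiv.symm_apply_apply])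

lemma aux_det_symm_mE (x : (F × F) × (F × F)) :
    (mE.symm x).det = x.1.1 * x.1.2 - x.2.1 * x.2.2 := by
  rw [Matrix.det_fin_two]
  simp [mE]

lemma aux_entries_symm_mE (x : (F × F) × (F × F)) :
    mE.symm x 0 0 = x.1.1 ∧ mE.symm x 1 1 = x.1.2 ∧ mE.symm x 0 1 = x.2.1
      ∧ mE.symm x 1 0 = x.2.2 := by
  refine ⟨?_, ?_, ?_, ?_⟩ <;> simp [mE]

lemma aux_cardNK (q : ℕ) (hq : Fintype.card F = q) (hq3 : 3 ≤ q) :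
    Fintype.card {A : Matrix (Fin 2) (Fin 2) F // A.det ≠ 0}
      = q * (q - 1) * (q ^ 2 - 1) := by
  have h1 : (1:ℕ) ≤ q := by omega
  have h2 : (1:ℕ) ≤ q ^ 2 := Nat.one_le_pow _ _ (by omega)
  have key : (Fintype.card {A : Matrix (Fin 2) (Fin 2) F // A.det ≠ 0} : ℤ)
      = (q:ℤ)^4 - ((2 * q - 1)^2 + ((q:ℤ) - 1)^3) := by
    rw [aux_card_transfer]
    have : (univ.filter fun x : (F × F) × (F × F) => (mE.symm x).det ≠ 0)
        = univ.filter fun x : (F × F) × (F × F) =>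
            x.1.1 * x.1.2 ≠ x.2.1 * x.2.2 ∧ (fun p : F × F => p.1 * p.2) x.1 ≠ x.2.1 * x.2.2 := by
      apply Finset.filter_congr; intro x _
      rw [aux_det_symm_mE, sub_ne_zero, and_self]
    rw [this, aux_count_master (fun p : F × F => p.1 * p.2)]
    have : ∀ p : F × F, (W F (p.1 * p.2) + W F (p.1 * p.2)
        - if p.1 * p.2 = p.1 * p.2 then W F (p.1 * p.2) else 0) = W F (p.1 * p.2) := by
      intro p; rw [if_pos rfl]; ring
    rw [Finset.sum_congr rfl fun p _ => this p, aux_sum_W_mul, hq]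
  have cast_eq : ((q * (q - 1) * (q ^ 2 - 1) : ℕ) : ℤ)
      = (q:ℤ)^4 - ((2 * q - 1)^2 + ((q:ℤ) - 1)^3) := by
    push_cast [Nat.cast_sub h1, Nat.cast_sub h2]
    ring
  exact Nat.cast_injective (key.trans cast_eq.symm)

/-- The rank-one pivot matrix E₁₁. -/
def Epiv (F : Type) [Zero F] [One F] : Matrix (Fin 2) (Fin 2) F :=
  Matrix.of ![![1, 0], ![0, 0]]

lemma aux_cardNL (q : ℕ) (hq : Fintype.card F = q) (hq3 : 3 ≤ q) :
    Fintype.card {A : Matrix (Fin 2) (Fin 2) F // A.det ≠ 0 ∧ (A - 1).det ≠ 0}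
      = q * (q ^ 3 - 2 * q ^ 2 - q + 3) := by
  have h1 : 2 * q ^ 2 ≤ q ^ 3 := by nlinarith
  have h2 : q ≤ q ^ 3 - 2 * q ^ 2 := by nlinarith [Nat.sub_add_cancel h1]
  have key : (Fintype.card {A : Matrix (Fin 2) (Fin 2) F // A.det ≠ 0 ∧ (A - 1).det ≠ 0} : ℤ)
      = (q:ℤ)^4 - (2 * ((2 * q - 1)^2 + ((q:ℤ) - 1)^3))
        + (2 * (2 * (q:ℤ) - 1) + ((q:ℤ) - 2) * ((q:ℤ) - 1)) := by
    rw [aux_card_transfer]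
    have : (univ.filter fun x : (F × F) × (F × F) =>
          (mE.symm x).det ≠ 0 ∧ (mE.symm x - 1).det ≠ 0)
        = univ.filter fun x : (F × F) × (F × F) =>
            x.1.1 * x.1.2 ≠ x.2.1 * x.2.2
              ∧ (fun p : F × F => (p.1 - 1) * (p.2 - 1)) x.1 ≠ x.2.1 * x.2.2 := by
      apply Finset.filter_congr; intro x _
      obtain ⟨e1, e2, e3, e4⟩ := aux_entries_symm_mE x
      rw [aux_det_symm_mE, Matrix.det_fin_two]
      simp only [Matrix.sub_apply, Matrix.one_apply_eq,
        Matrix.one_apply_ne (by decide : (0 : Fin 2) ≠ 1),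
        Matrix.one_apply_ne (by decide : (1 : Fin 2) ≠ 0), e1, e2, e3, e4, sub_zero]
      rw [sub_ne_zero, sub_ne_zero]
    rw [this, aux_count_master (fun p : F × F => (p.1 - 1) * (p.2 - 1)),
      Finset.sum_sub_distrib, Finset.sum_add_distrib, aux_sum_W_mul,
      aux_sum_W_shift2, aux_sum_W_mul, aux_sum_diag2, hq]
    ring
  have cast_eq : ((q * (q ^ 3 - 2 * q ^ 2 - q + 3) : ℕ) : ℤ)
      = (q:ℤ)^4 - (2 * ((2 * q - 1)^2 + ((q:ℤ) - 1)^3))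
        + (2 * (2 * (q:ℤ) - 1) + ((q:ℤ) - 2) * ((q:ℤ) - 1)) := by
    push_cast [Nat.cast_sub h1, Nat.cast_sub h2]
    ring
  exact Nat.cast_injective (key.trans cast_eq.symm)

lemma aux_cardNM (q : ℕ) (hq : Fintype.card F = q) (hq3 : 3 ≤ q) :
    Fintype.card {A : Matrix (Fin 2) (Fin 2) F // A.det ≠ 0 ∧ (A - Epiv F).det ≠ 0}
      = q * ((q - 1) * (q ^ 2 - q - 1)) := by
  have h1 : (1:ℕ) ≤ q := by omega
  have h2 : q ≤ q ^ 2 := by nlinarith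
  have h3 : (1:ℕ) ≤ q ^ 2 - q := by nlinarith [Nat.sub_add_cancel h2]
  have key : (Fintype.card {A : Matrix (Fin 2) (Fin 2) F // A.det ≠ 0
        ∧ (A - Epiv F).det ≠ 0} : ℤ)
      = (q:ℤ)^4 - (2 * ((2 * q - 1)^2 + ((q:ℤ) - 1)^3))
        + (q:ℤ) * (2 * (q:ℤ) - 1) := by
    rw [aux_card_transfer]
    have : (univ.filter fun x : (F × F) × (F × F) =>
          (mE.symm x).det ≠ 0 ∧ (mE.symm x - Epiv F).det ≠ 0)
        = univ.filter fun x : (F × F) × (F × F) =>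
            x.1.1 * x.1.2 ≠ x.2.1 * x.2.2
              ∧ (fun p : F × F => (p.1 - 1) * p.2) x.1 ≠ x.2.1 * x.2.2 := by
      apply Finset.filter_congr; intro x _
      obtain ⟨e1, e2, e3, e4⟩ := aux_entries_symm_mE x
      rw [aux_det_symm_mE, Matrix.det_fin_two]
      simp only [Matrix.sub_apply, e1, e2, e3, e4, Epiv, Matrix.of_apply]
      norm_num [sub_eq_zero]
    rw [this, aux_count_master (fun p : F × F => (p.1 - 1) * p.2), Finset.sum_sub_distrib,
      Finset.sum_add_distrib, aux_sum_W_mul, aux_sum_W_shift1, aux_sum_W_mul,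
      aux_sum_diag1, hq]
    ring
  have cast_eq : ((q * ((q - 1) * (q ^ 2 - q - 1)) : ℕ) : ℤ)
      = (q:ℤ)^4 - (2 * ((2 * q - 1)^2 + ((q:ℤ) - 1)^3))
        + (q:ℤ) * (2 * (q:ℤ) - 1) := by
    push_cast [Nat.cast_sub h1, Nat.cast_sub h2, Nat.cast_sub h3]
    ring
  exact Nat.cast_injective (key.trans cast_eq.symm)

/-- The number of matrices A with A and A - D both invertible. -/
def cnt (D : Matrix (Fin 2) (Fin 2) F) : ℕ :=
  Fintype.card {A : Matrix (Fin 2) (Fin 2) F // A.det ≠ 0 ∧ (A - D).det ≠ 0}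

lemma aux_cnt_mul (P Q D : Matrix (Fin 2) (Fin 2) F) (hP : P.det ≠ 0) (hQ : Q.det ≠ 0) :
    cnt (P * D * Q) = cnt D := by
  haveI : Invertible P := P.invertibleOfIsUnitDet (isUnit_iff_ne_zero.2 hP)
  haveI : Invertible Q := Q.invertibleOfIsUnitDet (isUnit_iff_ne_zero.2 hQ)
  let e : Matrix (Fin 2) (Fin 2) F ≃ Matrix (Fin 2) (Fin 2) F :=
    { toFun := fun A => P * A * Q
      invFun := fun B => ⅟P * B * ⅟Q
      left_inv := fun A => by simp [Matrix.mul_assoc]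
      right_inv := fun B => by simp [Matrix.mul_assoc] }
  refine (Fintype.card_congr (Equiv.subtypeEquiv e fun A => ?_)).symm
  show _ ↔ (P * A * Q).det ≠ 0 ∧ (P * A * Q - P * D * Q).det ≠ 0
  have h1 : P * A * Q - P * D * Q = P * (A - D) * Q := by
    rw [Matrix.mul_sub, Matrix.sub_mul]
  rw [h1, Matrix.det_mul, Matrix.det_mul, Matrix.det_mul, Matrix.det_mul]
  simp [hP, hQ]

lemma aux_PEQ_entry (P Q : Matrix (Fin 2) (Fin 2) F) (k l : Fin 2) :
    (P * Epiv F * Q) k l = P k 0 * Q 0 l := by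
  simp [Matrix.mul_apply, Epiv, Fin.sum_univ_two]

lemma fin2cases : ∀ m : Fin 2, m = 0 ∨ m = 1 := by decide

lemma aux_rank1_decomp (D : Matrix (Fin 2) (Fin 2) F) (hD : D ≠ 0) (hdet : D.det = 0) :
    ∃ P Q : Matrix (Fin 2) (Fin 2) F, P.det ≠ 0 ∧ Q.det ≠ 0 ∧ D = P * Epiv F * Q := by
  have hdet2 : D 0 0 * D 1 1 - D 0 1 * D 1 0 = 0 := by
    rw [← Matrix.det_fin_two]; exact hdet
  obtain ⟨i, j, hij⟩ : ∃ i j, D i j ≠ 0 := by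
    by_contra h; push_neg at h
    exact hD (by ext i j; simpa using h i j)
  obtain ⟨u, v, hu, hv, huv⟩ : ∃ u v : Fin 2 → F, (u 0 ≠ 0 ∨ u 1 ≠ 0)
      ∧ (v 0 ≠ 0 ∨ v 1 ≠ 0) ∧ ∀ k l, D k l = u k * v l := by
    refine ⟨fun k => D k j / D i j, fun l => D i l, ?_, ?_, ?_⟩
    · rcases fin2cases i with rfl | rfl
      · exact Or.inl (by simp [div_ne_zero hij hij])
      · exact Or.inr (by simp [div_ne_zero hij hij])
    · rcases fin2cases j with rfl | rfl
      · exact Or.inl hij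
      · exact Or.inr hij
    · intro k l
      rw [div_mul_eq_mul_div, eq_div_iff hij]
      rcases fin2cases i with rfl | rfl <;> rcases fin2cases j with rfl | rfl <;>
        rcases fin2cases k with rfl | rfl <;> rcases fin2cases l with rfl | rfl <;>
        first
          | ring1
          | linear_combination hdet2
          | linear_combination -hdet2
  obtain ⟨P, hPdet, hP0, hP1⟩ : ∃ P : Matrix (Fin 2) (Fin 2) F,
      P.det ≠ 0 ∧ P 0 0 = u 0 ∧ P 1 0 = u 1 := by
    rcases hu with h | h
    · exact ⟨Matrix.of ![![u 0, 0], ![u 1, 1]], by simp [Matrix.det_fin_two_of, h], rfl, rfl⟩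
    · exact ⟨Matrix.of ![![u 0, 1], ![u 1, 0]], by simp [Matrix.det_fin_two_of, h], rfl, rfl⟩
  obtain ⟨Q, hQdet, hQ0, hQ1⟩ : ∃ Q : Matrix (Fin 2) (Fin 2) F,
      Q.det ≠ 0 ∧ Q 0 0 = v 0 ∧ Q 0 1 = v 1 := by
    rcases hv with h | h
    · exact ⟨Matrix.of ![![v 0, v 1], ![0, 1]], by simp [Matrix.det_fin_two_of, h], rfl, rfl⟩
    · exact ⟨Matrix.of ![![v 0, v 1], ![1, 0]], by simp [Matrix.det_fin_two_of, h], rfl, rfl⟩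
  refine ⟨P, Q, hPdet, hQdet, ?_⟩
  ext k l
  rw [aux_PEQ_entry, huv k l]
  rcases fin2cases k with rfl | rfl <;> rcases fin2cases l with rfl | rfl <;>
    simp [hP0, hP1, hQ0, hQ1]

end Aux

/-- The graph G₂ on 2×2 matrices over F_q, with M ~ N iff rank(M - N) = 2, is
strongly regular with parameters (q⁴, q(q-1)(q²-1), q(q³-2q²-q+3), q(q-1)(q²-q-1)). -/
theorem stmt_10 (F : Type) [Field F] [Fintype F] [DecidableEq F] (q : ℕ)
    (hq : Fintype.card F = q) (hodd : Odd q) :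
    ∃ (G : SimpleGraph (Matrix (Fin 2) (Fin 2) F)) (_ : DecidableRel G.Adj),
      (∀ M N : Matrix (Fin 2) (Fin 2) F, G.Adj M N ↔ (M - N).rank = 2) ∧
      G.IsSRGWith (q ^ 4) (q * (q - 1) * (q ^ 2 - 1))
        (q * (q ^ 3 - 2 * q ^ 2 - q + 3)) (q * ((q - 1) * (q ^ 2 - q - 1))) := by
  have hq2 : 2 ≤ q := hq ▸ Fintype.one_lt_card
  have hq3 : 3 ≤ q := by
    rcases hodd with ⟨m, hm⟩; omega
  let G : SimpleGraph (Matrix (Fin 2) (Fin 2) F) :=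
    { Adj := fun M N => (M - N).det ≠ 0
      symm := by
        constructor
        intro M N h
        rw [← neg_sub M N, Matrix.det_neg]
        simpa using h
      loopless := by constructor; intro M; simp }
  letI hdec : DecidableRel G.Adj := fun M N => show Decidable ((M - N).det ≠ 0) from inferInstance
  refine ⟨G, hdec, fun M N => (aux_rank2_iff (M - N)).symm, ?_, ?_, ?_, ?_⟩
  · -- card
    show Fintype.card (Matrix (Fin 2) (Fin 2) F) = q ^ 4
    rw [Fintype.card_congr (mE (F := F)), Fintype.card_prod, Fintype.card_prod, hq]
    ring
  · -- regular
    intro v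
    show G.degree v = q * (q - 1) * (q ^ 2 - 1)
    rw [← SimpleGraph.card_neighborSet_eq_degree]
    have e : ↑(G.neighborSet v) ≃ {A : Matrix (Fin 2) (Fin 2) F // A.det ≠ 0} :=
      Equiv.subtypeEquiv (Equiv.subLeft v) fun N => Iff.rfl
    exact (Fintype.card_congr e).trans (aux_cardNK q hq hq3)
  · -- of adj
    intro v w hvw
    have hd : (v - w).det ≠ 0 := hvw
    have e1 : Fintype.card {A : Matrix (Fin 2) (Fin 2) F //
        A.det ≠ 0 ∧ (A - (v - w)).det ≠ 0} = q * (q ^ 3 - 2 * q ^ 2 - q + 3) := by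
      have step : cnt (v - w) = cnt (1 : Matrix (Fin 2) (Fin 2) F) := by
        have := aux_cnt_mul (v - w) 1 1 hd (by simp)
        simpa using this
      exact step.trans (aux_cardNL q hq hq3)
    have e : ↑(G.commonNeighbors v w) ≃ {A : Matrix (Fin 2) (Fin 2) F //
        A.det ≠ 0 ∧ (A - (v - w)).det ≠ 0} := by
      refine Equiv.subtypeEquiv (Equiv.subLeft v) fun x => ?_
      have h : v - x - (v - w) = w - x := by abel
      show ((v - x).det ≠ 0 ∧ (w - x).det ≠ 0) ↔ _
      rw [Equiv.subLeft_apply, h]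
    exact (Fintype.card_congr e).trans e1
  · -- of not adj
    intro v w hne hnadj
    have hd0 : (v - w).det = 0 := not_not.1 hnadj
    have hDne : v - w ≠ 0 := sub_ne_zero.2 hne
    obtain ⟨P, Q, hP, hQ, hdecomp⟩ := aux_rank1_decomp (v - w) hDne hd0
    have e1 : Fintype.card {A : Matrix (Fin 2) (Fin 2) F //
        A.det ≠ 0 ∧ (A - (v - w)).det ≠ 0} = q * ((q - 1) * (q ^ 2 - q - 1)) := by
      have step : cnt (v - w) = cnt (Epiv F) := by
        rw [hdecomp]; exact aux_cnt_mul P Q (Epiv F) hP hQ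
      exact step.trans (aux_cardNM q hq hq3)
    have e : ↑(G.commonNeighbors v w) ≃ {A : Matrix (Fin 2) (Fin 2) F //
        A.det ≠ 0 ∧ (A - (v - w)).det ≠ 0} := by
      refine Equiv.subtypeEquiv (Equiv.subLeft v) fun x => ?_
      have h : v - x - (v - w) = w - x := by abel
      show ((v - x).det ≠ 0 ∧ (w - x).det ≠ 0) ↔ _
      rw [Equiv.subLeft_apply, h]
    exact (Fintype.card_congr e).trans e1
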